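/- In an acyclic b-matching preference instance there is no infinite sequence of active initiatives: every sequence of configurations C_0, C_1, …, in which each C_{i+1} is obtained from C_i by an active initiative, has length strictly less than the (finite) total number of configurations of the instance. -/

import Mathlib

/-!
A formalization of b-matching preference instances (peers, acceptance graph,
quotas, preference lists given by ranks), configurations, blocking pairs,
stability, active initiatives, loving pairs, and acyclicity.
-/

open Finset

/-- A b-matching preference instance on a finite set `P` of peers:
an acceptance graph `G`, quotas `b`, and for each peer `p` a rank function
(`rank p q` is the position of `q` in `p`'s preference list, smaller is better),
injective on the neighbors of `p` (strict preferences). -/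
structure PrefInstance (P : Type*) [Fintype P] [DecidableEq P] where
  G : SimpleGraph P
  b : P → ℕ
  rank : P → P → ℕ
  rank_injOn : ∀ p : P, Set.InjOn (rank p) {q | G.Adj p q}

namespace PrefInstance

variable {P : Type*} [Fintype P] [DecidableEq P] (I : PrefInstance P)

/-- `p` prefers `q` to `r` (both neighbors of `p`, `q` ranked better). -/
def Prefers (p q r : P) : Prop :=
  I.G.Adj p q ∧ I.G.Adj p r ∧ I.rank p q < I.rank p r

/-- The instance is acyclic: there is no preference cycle, i.e. no `k ≥ 3`
distinct peers `p_1, …, p_k` (indices modulo `k`) such that each `p_i`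
prefers `p_{i+1}` to `p_{i-1}`. -/
def Acyclic : Prop :=
  ¬ ∃ (k : ℕ) (f : ZMod k → P), 3 ≤ k ∧ Function.Injective f ∧
      ∀ i : ZMod k, I.Prefers (f i) (f (i + 1)) (f (i - 1))

/-- The mates of `p` in a set `C` of edges. -/
def mates (C : Finset (Sym2 P)) (p : P) : Finset P :=
  Finset.univ.filter fun q => s(p, q) ∈ C

/-- `C` is a configuration: a set of edges of the acceptance graph in which every
peer `p` has at most `b p` mates. -/
def IsConfig (C : Finset (Sym2 P)) : Prop :=
  (∀ e ∈ C, e ∈ I.G.edgeSet) ∧ ∀ p : P, (mates C p).card ≤ I.b p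

/-- `p` is under-mated in `C`: it has fewer than `b p` mates. -/
def UnderMated (C : Finset (Sym2 P)) (p : P) : Prop :=
  (mates C p).card < I.b p

/-- `p` is willing to pair with `q`: it is under-mated, or it prefers `q`
to its worst mate in `C`. -/
def Willing (C : Finset (Sym2 P)) (p q : P) : Prop :=
  I.UnderMated C p ∨ ∃ w ∈ mates C p, I.rank p q < I.rank p w

/-- `{p, q}` is a blocking pair for `C`: an edge of the acceptance graph not in
`C` such that each endpoint is under-mated or prefers the other to its worst mate. -/
def BlockingPair (C : Finset (Sym2 P)) (p q : P) : Prop :=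
  I.G.Adj p q ∧ s(p, q) ∉ C ∧ I.Willing C p q ∧ I.Willing C q p

/-- A configuration is stable if it admits no blocking pair. -/
def IsStable (C : Finset (Sym2 P)) : Prop :=
  I.IsConfig C ∧ ∀ p q : P, ¬ I.BlockingPair C p q

/-- The edges to be dropped at `p` when `p` gets a new mate: none if `p` is
under-mated, otherwise the edge joining `p` to its worst mate in `C`. -/
def dropEdges (C : Finset (Sym2 P)) (p : P) : Finset (Sym2 P) :=
  if (mates C p).card < I.b p then ∅
  else ((mates C p).filter fun w => ∀ r ∈ mates C p, I.rank p r ≤ I.rank p w).image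
      fun w => s(p, w)

/-- The configuration produced by resolving the blocking pair `{p, q}` of `C`:
add the edge `{p, q}` and, for each of `p` and `q` already at full quota,
remove the edge joining it to its worst mate. -/
def resolve (C : Finset (Sym2 P)) (p q : P) : Finset (Sym2 P) :=
  insert s(p, q) (C \ (I.dropEdges C p ∪ I.dropEdges C q))

/-- `C'` is obtained from `C` by an active initiative. -/
def ActiveStep (C C' : Finset (Sym2 P)) : Prop :=
  ∃ p q : P, I.BlockingPair C p q ∧ C' = I.resolve C p q

/-- `{p, q}` is a loving pair: an edge of the acceptance graph whose endpoints
rank each other first. -/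
def LovingPair (p q : P) : Prop :=
  I.G.Adj p q ∧ (∀ r : P, I.G.Adj p r → I.rank p q ≤ I.rank p r) ∧
    ∀ r : P, I.G.Adj q r → I.rank q p ≤ I.rank q r

open scoped Classical in
/-- The best-mate initiative of peer `p` at configuration `C`: resolve the
blocking pair `{p, q}` where `q` is the peer `p` prefers most among all peers
forming a blocking pair with `p`; if `p` belongs to no blocking pair, `C` is
left unchanged. -/
noncomputable def bestMateInit (C : Finset (Sym2 P)) (p : P) : Finset (Sym2 P) :=
  if h : ∃ q : P, I.BlockingPair C p q ∧
      ∀ r : P, I.BlockingPair C p r → I.rank p q ≤ I.rank p r then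
    I.resolve C p h.choose
  else C

end PrefInstance

variable {P : Type*} [Fintype P] [DecidableEq P]

open PrefInstance

namespace PrefInstance

variable {P : Type*} [Fintype P] [DecidableEq P] (I : PrefInstance P)

open scoped Classical

/-- Neighbors of `p` as a finset. -/
noncomputable def nbrs (p : P) : Finset P := Finset.univ.filter fun q => I.G.Adj p q

lemma mem_nbrs {p q : P} : q ∈ I.nbrs p ↔ I.G.Adj p q := by simp [nbrs]

/-- The favorite neighbor of `p` (or `p` itself if `p` has no neighbor). -/
noncomputable def best (p : P) : P :=
  if h : (I.nbrs p).Nonempty then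
    ((I.nbrs p).exists_min_image (I.rank p) h).choose
  else p

lemma best_adj {p q : P} (h : I.G.Adj p q) : I.G.Adj p (I.best p) := by
  have hne : (I.nbrs p).Nonempty := ⟨q, I.mem_nbrs.mpr h⟩
  have := ((I.nbrs p).exists_min_image (I.rank p) hne).choose_spec
  rw [best, dif_pos hne]
  exact I.mem_nbrs.mp this.1

lemma best_min {p r : P} (hpr : I.G.Adj p r) : I.rank p (I.best p) ≤ I.rank p r := by
  have hne : (I.nbrs p).Nonempty := ⟨r, I.mem_nbrs.mpr hpr⟩
  have := ((I.nbrs p).exists_min_image (I.rank p) hne).choose_spec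
  rw [best, dif_pos hne]
  exact this.2 r (I.mem_nbrs.mpr hpr)

/-- In an acyclic instance, any component with an edge contains a loving pair. -/
lemma exists_loving (hI : I.Acyclic) {a b : P} (hab : I.G.Adj a b) :
    ∃ p q : P, I.G.Adj p q ∧ (∀ r, I.G.Adj p r → I.rank p q ≤ I.rank p r) ∧
      (∀ r, I.G.Adj q r → I.rank q p ≤ I.rank q r) := by
  have chain : ∀ n : ℕ, I.G.Adj (I.best^[n] a) (I.best^[n + 1] a) := by
    intro n
    induction n with
    | zero => simpa using I.best_adj hab
    | succ n ih =>
      rw [Function.iterate_succ_apply'] at ih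
      simp only [Function.iterate_succ_apply']
      exact I.best_adj ih.symm
  obtain ⟨i, j, hij, heq⟩ : ∃ i j : ℕ, i < j ∧ I.best^[i] a = I.best^[j] a := by
    obtain ⟨i, j, hne, h⟩ := Finite.exists_ne_map_eq_of_infinite (fun n : ℕ => I.best^[n] a)
    rcases hne.lt_or_gt with hlt | hlt
    · exact ⟨i, j, hlt, h⟩
    · exact ⟨j, i, hlt, h.symm⟩
  set y := I.best^[i] a with hy
  have hQ : 0 < j - i ∧ I.best^[j - i] y = y := by
    constructor
    · omega
    · rw [hy, ← Function.iterate_add_apply]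
      have : j - i + i = j := by omega
      rw [this, ← heq]
  have hex : ∃ m, 0 < m ∧ I.best^[m] y = y := ⟨j - i, hQ⟩
  set n := Nat.find hex with hnn
  obtain ⟨hn1, hny⟩ : 0 < n ∧ I.best^[n] y = y := Nat.find_spec hex
  have hmin : ∀ m < n, ¬ (0 < m ∧ I.best^[m] y = y) := fun m hm => Nat.find_min hex hm
  have hyit : ∀ m, I.best^[m] y = I.best^[m + i] a := fun m =>
    (Function.iterate_add_apply _ m i a).symm
  have chainy : ∀ m, I.G.Adj (I.best^[m] y) (I.best^[m + 1] y) := by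
    intro m
    rw [hyit, hyit]
    have h2 : m + 1 + i = (m + i) + 1 := by omega
    rw [h2]
    exact chain (m + i)
  have hper : ∀ m, I.best^[m + n] y = I.best^[m] y := by
    intro m
    rw [Function.iterate_add_apply, hny]
  have hmod : ∀ m, I.best^[m] y = I.best^[m % n] y := by
    intro m
    induction m using Nat.strong_induction_on with
    | _ m ih =>
      rcases Nat.lt_or_ge m n with h | h
      · rw [Nat.mod_eq_of_lt h]
      · have e1 : m - n + n = m := Nat.sub_add_cancel h
        have e2 : m % n = (m - n) % n := by
          conv_lhs => rw [← e1]
          simp [Nat.add_mod_right]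
        rw [e2, ← ih (m - n) (by omega)]
        conv_lhs => rw [← e1]
        rw [hper]
  have hdist : ∀ s t : ℕ, s < t → t < n → I.best^[s] y ≠ I.best^[t] y := by
    intro s t hst htn heq'
    have h1 : I.best^[n - t + t] y = y := by
      rw [Nat.sub_add_cancel htn.le, hny]
    rw [Function.iterate_add_apply, ← heq', ← Function.iterate_add_apply] at h1
    exact hmin (n - t + s) (by omega) ⟨by omega, h1⟩
  have hsucc' : ∀ m, I.best^[m + 1] y = I.best (I.best^[m] y) :=
    fun m => Function.iterate_succ_apply' _ m y
  rcases Nat.lt_or_ge n 3 with hn3 | hn3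
  · interval_cases n
    · -- n = 1 : a self-loop, impossible
      have h0 := chainy 0
      rw [show (0:ℕ) + 1 = 1 from rfl, hny] at h0
      exact (I.G.loopless.irrefl y (by simpa using h0)).elim
    · -- n = 2 : loving pair
      refine ⟨y, I.best y, ?_, fun r hr => I.best_min hr, ?_⟩
      · have h0 := chainy 0
        rw [hsucc' 0] at h0
        simpa using h0
      · have hbq : I.best (I.best y) = y := by
          have := hny
          rw [show (2:ℕ) = 1 + 1 from rfl, hsucc' 1, hsucc' 0] at this
          simpa using this
        intro r hr
        have h5 := I.best_min hr
        rwa [hbq] at h5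
  · -- n ≥ 3 : a preference cycle, contradicting acyclicity
    exfalso
    haveI : NeZero n := ⟨by omega⟩
    haveI : Fact (1 < n) := ⟨by omega⟩
    set f : ZMod n → P := fun i => I.best^[(i : ZMod n).val] y with hf
    have hinj : Function.Injective f := by
      intro s t hfe
      by_contra hne
      have hvne : s.val ≠ t.val := fun h => hne (ZMod.val_injective n h)
      rcases hvne.lt_or_gt with h | h
      · exact hdist s.val t.val h (ZMod.val_lt t) hfe
      · exact hdist t.val s.val h (ZMod.val_lt s) hfe.symm
    have hsucc : ∀ i : ZMod n, f (i + 1) = I.best (f i) := by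
      intro i
      have : (i + 1).val = (i.val + 1) % n := by
        rw [ZMod.val_add, ZMod.val_one]
      rw [hf]
      simp only
      rw [this, ← hmod, hsucc']
    have hadj : ∀ i : ZMod n, I.G.Adj (f i) (f (i + 1)) := by
      intro i
      rw [hsucc]
      have := chainy i.val
      rw [hsucc'] at this
      exact this
    apply hI
    refine ⟨n, f, hn3, hinj, fun i => ?_⟩
    have ha1 : I.G.Adj (f i) (f (i + 1)) := hadj i
    have ha2 : I.G.Adj (f i) (f (i - 1)) := by
      have := hadj (i - 1)
      rw [sub_add_cancel] at this
      exact this.symm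
    have hne2 : f (i + 1) ≠ f (i - 1) := by
      intro h
      have h2 : i + 1 = i - 1 := hinj h
      have h3 : ((2 : ℕ) : ZMod n) = 0 := by
        have : (i + 1) - (i - 1) = 0 := by rw [h2]; ring
        calc ((2 : ℕ) : ZMod n) = (i + 1) - (i - 1) := by push_cast; ring
        _ = 0 := this
      have := (ZMod.natCast_eq_zero_iff 2 n).mp h3
      have := Nat.le_of_dvd (by norm_num) this
      omega
    have hle : I.rank (f i) (f (i + 1)) ≤ I.rank (f i) (f (i - 1)) := by
      rw [hsucc]
      exact I.best_min ha2
    have hlt : I.rank (f i) (f (i + 1)) < I.rank (f i) (f (i - 1)) := by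
      rcases hle.lt_or_eq with h | h
      · exact h
      · exact absurd (I.rank_injOn (f i) ha1 ha2 h) hne2
    exact ⟨ha1, ha2, hlt⟩


/-- The instance obtained by deleting one edge. -/
def delE (e : Sym2 P) : PrefInstance P where
  G := I.G.deleteEdges {e}
  b := I.b
  rank := I.rank
  rank_injOn := fun p => (I.rank_injOn p).mono fun q hq =>
    (SimpleGraph.deleteEdges_adj.mp hq).1

lemma delE_prefers {e : Sym2 P} {p q r : P} (h : (I.delE e).Prefers p q r) :
    I.Prefers p q r := by
  obtain ⟨h1, h2, h3⟩ := h
  exact ⟨(SimpleGraph.deleteEdges_adj.mp h1).1, (SimpleGraph.deleteEdges_adj.mp h2).1, h3⟩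

lemma delE_acyclic {e : Sym2 P} (hI : I.Acyclic) : (I.delE e).Acyclic := by
  rintro ⟨k, f, hk, hinj, hpref⟩
  exact hI ⟨k, f, hk, hinj, fun i => I.delE_prefers (hpref i)⟩

lemma exists_weight_aux : ∀ (n : ℕ) (I : PrefInstance P), I.Acyclic →
    I.G.edgeSet.ncard ≤ n →
    ∃ w : Sym2 P → ℕ, ∀ p q r, I.Prefers p q r → w s(p, q) < w s(p, r) := by
  intro n
  induction n with
  | zero =>
    intro I hI hcard
    refine ⟨fun _ => 0, fun p q r hpqr => ?_⟩
    exfalso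
    have hfin : I.G.edgeSet.Finite := Set.toFinite _
    have hempty : I.G.edgeSet = ∅ := by
      rw [← Set.ncard_eq_zero hfin] at *
      omega
    have hmem : s(p, q) ∈ I.G.edgeSet := I.G.mem_edgeSet.mpr hpqr.1
    rw [hempty] at hmem
    exact hmem
  | succ n ih =>
    intro I hI hcard
    by_cases hemp : I.G.edgeSet = ∅
    · refine ⟨fun _ => 0, fun p q r hpqr => ?_⟩
      exfalso
      have hmem : s(p, q) ∈ I.G.edgeSet := I.G.mem_edgeSet.mpr hpqr.1
      rw [hemp] at hmem
      exact hmem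
    · obtain ⟨e, he⟩ := Set.nonempty_iff_ne_empty.mpr hemp
      obtain ⟨a, b, he⟩ : ∃ a b : P, s(a, b) ∈ I.G.edgeSet := by
        induction e using Sym2.ind with
        | _ a b => exact ⟨a, b, he⟩
      have hab : I.G.Adj a b := he
      obtain ⟨p, q, hpq, hpfav, hqfav⟩ := I.exists_loving hI hab
      set I' := I.delE s(p, q) with hI'
      have hacy' : I'.Acyclic := I.delE_acyclic hI
      have hsub : I'.G.edgeSet ⊂ I.G.edgeSet := by
        rw [hI']
        show (I.G.deleteEdges {s(p, q)}).edgeSet ⊂ I.G.edgeSet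
        rw [SimpleGraph.edgeSet_deleteEdges]
        refine ⟨Set.diff_subset, fun hsup => ?_⟩
        have : s(p, q) ∈ I.G.edgeSet \ {s(p, q)} := hsup hpq
        simp at this
      have hcard' : I'.G.edgeSet.ncard ≤ n := by
        have := Set.ncard_lt_ncard hsub (Set.toFinite _)
        omega
      obtain ⟨w', hw'⟩ := ih I' hacy' hcard'
      refine ⟨fun e => if e = s(p, q) then 0 else w' e + 1, fun x y z hxyz => ?_⟩
      have hxy := hxyz.1
      have hxz := hxyz.2.1
      have hlt := hxyz.2.2
      by_cases h2 : s(x, z) = s(p, q)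
      · -- impossible: z would be x's favorite, yet x prefers y to z
        exfalso
        rcases Sym2.eq_iff.mp h2 with ⟨rfl, rfl⟩ | ⟨rfl, rfl⟩
        · exact absurd (hpfav y hxy) (by omega)
        · exact absurd (hqfav y hxy) (by omega)
      · by_cases h1 : s(x, y) = s(p, q)
        · simp only []
          rw [if_pos h1, if_neg h2]
          omega
        · have hpref' : I'.Prefers x y z := by
            refine ⟨?_, ?_, hlt⟩
            · rw [hI']
              exact SimpleGraph.deleteEdges_adj.mpr ⟨hxy, by simpa using h1⟩
            · rw [hI']
              exact SimpleGraph.deleteEdges_adj.mpr ⟨hxz, by simpa using h2⟩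
          have := hw' x y z hpref'
          simp only []
          rw [if_neg h1, if_neg h2]
          omega

/-- In an acyclic instance there is a global edge weight compatible with
all the preferences. -/
lemma exists_weight (hI : I.Acyclic) :
    ∃ w : Sym2 P → ℕ, ∀ p q r, I.Prefers p q r → w s(p, q) < w s(p, r) :=
  exists_weight_aux I.G.edgeSet.ncard I hI le_rfl


lemma mem_mates {C : Finset (Sym2 P)} {p a : P} : a ∈ mates C p ↔ s(p, a) ∈ C := by
  simp [mates]

lemma mates_adj {C : Finset (Sym2 P)} (hcfg : I.IsConfig C) {p a : P}
    (h : a ∈ mates C p) : I.G.Adj p a :=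
  I.G.mem_edgeSet.mp (hcfg.1 _ (mem_mates.mp h))

lemma dropEdges_subset {C : Finset (Sym2 P)} {p : P} : I.dropEdges C p ⊆ C := by
  intro e he
  rw [dropEdges] at he
  split_ifs at he with h
  · simp at he
  · obtain ⟨m, hm, rfl⟩ := Finset.mem_image.mp he
    exact mem_mates.mp (Finset.mem_filter.mp hm).1

lemma dropEdges_card_le {C : Finset (Sym2 P)} (hcfg : I.IsConfig C) (p : P) :
    (I.dropEdges C p).card ≤ 1 := by
  rw [dropEdges]
  split_ifs with h
  · simp
  · refine le_trans Finset.card_image_le (Finset.card_le_one.mpr ?_)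
    intro a ha b hb
    obtain ⟨ha1, ha2⟩ := Finset.mem_filter.mp ha
    obtain ⟨hb1, hb2⟩ := Finset.mem_filter.mp hb
    exact I.rank_injOn p (I.mates_adj hcfg ha1) (I.mates_adj hcfg hb1)
      (le_antisymm (hb2 a ha1) (ha2 b hb1))

lemma dropEdges_spec {C : Finset (Sym2 P)} {p : P} {e' : Sym2 P}
    (he' : e' ∈ I.dropEdges C p) :
    ¬ (mates C p).card < I.b p ∧
      ∃ m ∈ mates C p, e' = s(p, m) ∧ ∀ r ∈ mates C p, I.rank p r ≤ I.rank p m := by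
  rw [dropEdges] at he'
  split_ifs at he' with h
  · simp at he'
  · obtain ⟨m, hm, rfl⟩ := Finset.mem_image.mp he'
    obtain ⟨hm1, hm2⟩ := Finset.mem_filter.mp hm
    exact ⟨h, m, hm1, rfl, hm2⟩

lemma dropEdges_nonempty {C : Finset (Sym2 P)} {p : P}
    (hfull : ¬ (mates C p).card < I.b p) (hne : (mates C p).Nonempty) :
    ∃ m ∈ mates C p, s(p, m) ∈ I.dropEdges C p := by
  obtain ⟨m, hm, hmax⟩ := (mates C p).exists_max_image (I.rank p) hne
  refine ⟨m, hm, ?_⟩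
  rw [dropEdges, if_neg hfull]
  exact Finset.mem_image.mpr ⟨m, Finset.mem_filter.mpr ⟨hm, hmax⟩, rfl⟩

lemma dropEdges_w_lt (w : Sym2 P → ℕ)
    (hw : ∀ p q r, I.Prefers p q r → w s(p, q) < w s(p, r))
    {C : Finset (Sym2 P)} {p q : P} (hcfg : I.IsConfig C) (hbp : I.BlockingPair C p q)
    {e' : Sym2 P} (he' : e' ∈ I.dropEdges C p) : w s(p, q) < w e' := by
  obtain ⟨hnum, m, hm, rfl, hmax⟩ := I.dropEdges_spec he'
  obtain ⟨hadj, hnotin, hwill, -⟩ := hbp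
  rcases hwill with hum | ⟨w0, hw0, hr⟩
  · exact absurd hum hnum
  · exact hw p q m ⟨hadj, I.mates_adj hcfg hm, lt_of_lt_of_le hr (hmax w0 hw0)⟩

lemma blockingPair_symm {C : Finset (Sym2 P)} {p q : P} (h : I.BlockingPair C p q) :
    I.BlockingPair C q p := by
  obtain ⟨h1, h2, h3, h4⟩ := h
  exact ⟨h1.symm, by rwa [Sym2.eq_swap], h4, h3⟩

lemma resolve_comm (C : Finset (Sym2 P)) (p q : P) :
    I.resolve C p q = I.resolve C q p := by
  rw [resolve, resolve, Sym2.eq_swap, Finset.union_comm]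

lemma mates_resolve_card_le {C : Finset (Sym2 P)} {p q : P}
    (hcfg : I.IsConfig C) (hbp : I.BlockingPair C p q) :
    (mates (I.resolve C p q) p).card ≤ I.b p := by
  obtain ⟨hadj, hnotin, hwill, -⟩ := hbp
  have hpq : p ≠ q := hadj.ne
  by_cases hum : (mates C p).card < I.b p
  · have hsub : mates (I.resolve C p q) p ⊆ insert q (mates C p) := by
      intro a ha
      rw [mem_mates, resolve, Finset.mem_insert] at ha
      rcases ha with h | h
      · rcases Sym2.eq_iff.mp h with ⟨-, rfl⟩ | ⟨h1, -⟩
        · exact Finset.mem_insert_self _ _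
        · exact absurd h1 hpq
      · exact Finset.mem_insert_of_mem (mem_mates.mpr (Finset.mem_sdiff.mp h).1)
    calc (mates (I.resolve C p q) p).card ≤ (insert q (mates C p)).card :=
          Finset.card_le_card hsub
      _ ≤ (mates C p).card + 1 := Finset.card_insert_le _ _
      _ ≤ I.b p := by omega
  · have hne : (mates C p).Nonempty := by
      rcases hwill with h | ⟨w0, hw0, -⟩
      · exact absurd h hum
      · exact ⟨w0, hw0⟩
    obtain ⟨m, hm, hmem⟩ := I.dropEdges_nonempty hum hne
    have hsub : mates (I.resolve C p q) p ⊆ insert q ((mates C p).erase m) := by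
      intro a ha
      rw [mem_mates, resolve, Finset.mem_insert] at ha
      rcases ha with h | h
      · rcases Sym2.eq_iff.mp h with ⟨-, rfl⟩ | ⟨h1, -⟩
        · exact Finset.mem_insert_self _ _
        · exact absurd h1 hpq
      · obtain ⟨h1, h2⟩ := Finset.mem_sdiff.mp h
        refine Finset.mem_insert_of_mem (Finset.mem_erase.mpr ⟨?_, mem_mates.mpr h1⟩)
        rintro rfl
        exact h2 (Finset.mem_union_left _ hmem)
    have hcm : 1 ≤ (mates C p).card := Finset.card_pos.mpr hne
    have hble : (mates C p).card ≤ I.b p := hcfg.2 p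
    calc (mates (I.resolve C p q) p).card ≤ (insert q ((mates C p).erase m)).card :=
          Finset.card_le_card hsub
      _ ≤ ((mates C p).erase m).card + 1 := Finset.card_insert_le _ _
      _ = ((mates C p).card - 1) + 1 := by rw [Finset.card_erase_of_mem hm]
      _ ≤ I.b p := by omega

lemma isConfig_resolve {C : Finset (Sym2 P)} {p q : P}
    (hcfg : I.IsConfig C) (hbp : I.BlockingPair C p q) :
    I.IsConfig (I.resolve C p q) := by
  constructor
  · intro e he
    rw [resolve, Finset.mem_insert] at he
    rcases he with rfl | he
    · exact I.G.mem_edgeSet.mpr hbp.1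
    · exact hcfg.1 e (Finset.mem_sdiff.mp he).1
  · intro x
    by_cases hxp : x = p
    · subst hxp
      exact I.mates_resolve_card_le hcfg hbp
    by_cases hxq : x = q
    · subst hxq
      rw [I.resolve_comm]
      exact I.mates_resolve_card_le hcfg (I.blockingPair_symm hbp)
    · have hsub : mates (I.resolve C p q) x ⊆ mates C x := by
        intro a ha
        rw [mem_mates, resolve, Finset.mem_insert] at ha
        rcases ha with h | h
        · exfalso
          rcases Sym2.eq_iff.mp h with ⟨h1, -⟩ | ⟨h1, -⟩
          · exact hxp h1
          · exact hxq h1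
        · exact mem_mates.mpr (Finset.mem_sdiff.mp h).1
      exact le_trans (Finset.card_le_card hsub) (hcfg.2 x)

lemma phi_lt_resolve (w : Sym2 P → ℕ)
    (hw : ∀ p q r, I.Prefers p q r → w s(p, q) < w s(p, r))
    (W : ℕ) (hW : ∀ e, w e ≤ W)
    {C : Finset (Sym2 P)} {p q : P} (hcfg : I.IsConfig C) (hbp : I.BlockingPair C p q) :
    ∑ e ∈ C, 3 ^ (W - w e) < ∑ e ∈ I.resolve C p q, 3 ^ (W - w e) := by
  rw [resolve]
  set D := I.dropEdges C p ∪ I.dropEdges C q with hD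
  have hDsub : D ⊆ C := Finset.union_subset I.dropEdges_subset I.dropEdges_subset
  have hnotin : s(p, q) ∉ C := hbp.2.1
  have hnotin' : s(p, q) ∉ C \ D := fun h => hnotin (Finset.mem_sdiff.mp h).1
  rw [Finset.sum_insert hnotin']
  have hsplit : ∑ e ∈ C \ D, 3 ^ (W - w e) + ∑ e ∈ D, 3 ^ (W - w e)
      = ∑ e ∈ C, 3 ^ (W - w e) := Finset.sum_sdiff hDsub
  have hDlt : ∀ e' ∈ D, w s(p, q) < w e' := by
    intro e' he'
    rcases Finset.mem_union.mp he' with h | h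
    · exact I.dropEdges_w_lt w hw hcfg hbp h
    · have := I.dropEdges_w_lt w hw hcfg (I.blockingPair_symm hbp) h
      rwa [Sym2.eq_swap] at this
  have hDterm : ∑ e ∈ D, 3 ^ (W - w e) < 3 ^ (W - w s(p, q)) := by
    rcases D.eq_empty_or_nonempty with hE | ⟨e0, he0⟩
    · rw [hE, Finset.sum_empty]
      exact pow_pos (by norm_num) _
    · have hWw : w s(p, q) < W + 1 := by
        have h1 := hDlt e0 he0
        have h2 := hW e0
        omega
      set t := W - w s(p, q) - 1 with ht
      have hWt : W - w s(p, q) = t + 1 := by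
        have h1 := hDlt e0 he0
        have h2 := hW e0
        omega
      have hbound : ∀ e' ∈ D, 3 ^ (W - w e') ≤ 3 ^ t := by
        intro e' he'
        have h1 := hDlt e' he'
        refine Nat.pow_le_pow_right (by norm_num) ?_
        omega
      have hcardD : D.card ≤ 2 := by
        have hcu := Finset.card_union_le (I.dropEdges C p) (I.dropEdges C q)
        rw [← hD] at hcu
        have h1 := I.dropEdges_card_le hcfg p
        have h2 := I.dropEdges_card_le hcfg q
        omega
      have hsum : ∑ e ∈ D, 3 ^ (W - w e) ≤ D.card * 3 ^ t := by
        calc ∑ e ∈ D, 3 ^ (W - w e) ≤ ∑ _e ∈ D, 3 ^ t := Finset.sum_le_sum hbound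
          _ = D.card * 3 ^ t := by rw [Finset.sum_const, smul_eq_mul]
      have hpos : 0 < 3 ^ t := pow_pos (by norm_num) _
      calc ∑ e ∈ D, 3 ^ (W - w e) ≤ D.card * 3 ^ t := hsum
        _ ≤ 2 * 3 ^ t := by
            exact Nat.mul_le_mul_right _ hcardD
        _ < 3 ^ (t + 1) := by
            rw [pow_succ]
            omega
        _ = 3 ^ (W - w s(p, q)) := by rw [hWt]
  omega

end PrefInstance
/-- In an acyclic instance there is no infinite sequence of
active initiatives: every such sequence has length strictly less than the
(finite) total number of configurations. -/
theorem acyclic_activeSteps_length_lt (I : PrefInstance P) (hI : I.Acyclic)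
    (k : ℕ) (f : ℕ → Finset (Sym2 P)) (hC : I.IsConfig (f 0))
    (hstep : ∀ i < k, I.ActiveStep (f i) (f (i + 1))) :
    k < Nat.card {C : Finset (Sym2 P) // I.IsConfig C} := by
  classical
  obtain ⟨w, hw⟩ := I.exists_weight hI
  set W := Finset.univ.sup w with hWdef
  have hW : ∀ e, w e ≤ W := fun e => Finset.le_sup (Finset.mem_univ e)
  set Φ : Finset (Sym2 P) → ℕ := fun C => ∑ e ∈ C, 3 ^ (W - w e) with hPhi
  have hconf : ∀ i ≤ k, I.IsConfig (f i) := by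
    intro i
    induction i with
    | zero => exact fun _ => hC
    | succ i ih =>
      intro hik
      obtain ⟨p, q, hbp, hre⟩ := hstep i (by omega)
      rw [hre]
      exact I.isConfig_resolve (ih (by omega)) hbp
  have hmono : ∀ i < k, Φ (f i) < Φ (f (i + 1)) := by
    intro i hik
    obtain ⟨p, q, hbp, hre⟩ := hstep i hik
    rw [hPhi]
    simp only []
    rw [hre]
    exact I.phi_lt_resolve w hw W hW (hconf i (by omega)) hbp
  have key : ∀ j ≤ k, ∀ i < j, Φ (f i) < Φ (f j) := by
    intro j
    induction j with
    | zero => intro _ i hi; omega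
    | succ j ih =>
      intro hj i hi
      have hs : Φ (f j) < Φ (f (j + 1)) := hmono j (by omega)
      rcases Nat.lt_succ_iff_lt_or_eq.mp hi with h | h
      · exact (ih (by omega) i h).trans hs
      · rw [h]; exact hs
  have hginj : Function.Injective
      (fun i : Fin (k + 1) => (⟨f i.val, hconf i.val (Nat.lt_succ_iff.mp i.isLt)⟩ :
        {C : Finset (Sym2 P) // I.IsConfig C})) := by
    intro i j h
    have hfe : f i.val = f j.val := congrArg Subtype.val h
    by_contra hne
    have hvne : i.val ≠ j.val := fun h' => hne (Fin.ext h')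
    rcases hvne.lt_or_gt with hlt | hlt
    · exact absurd (hfe ▸ key j.val (Nat.lt_succ_iff.mp j.isLt) i.val hlt) (lt_irrefl _)
    · exact absurd (hfe ▸ key i.val (Nat.lt_succ_iff.mp i.isLt) j.val hlt) (lt_irrefl _)
  have hcard := Nat.card_le_card_of_injective _ hginj
  rw [Nat.card_eq_fintype_card, Fintype.card_fin] at hcard
  omega
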